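/- In the Lazard bisection M(Σ,θ) = L · M(B,θ_B), the decomposition is unique: if l·m = l'·m' with l,l' ∈ L and m,m' ∈ M(B,θ_B), then l = l' and m = m'. -/

import Mathlib

/-- The relation `ab ~ ba` for commuting pairs `(a,b) ∈ θ`. -/
def traceRel {α : Type} (θ : α → α → Prop) : FreeMonoid α → FreeMonoid α → Prop :=
  fun u v => ∃ a b, θ a b ∧ u = FreeMonoid.of a * FreeMonoid.of b ∧
    v = FreeMonoid.of b * FreeMonoid.of a

/-- The trace congruence generated by `ab ~ ba` for `(a,b) ∈ θ`. -/
def traceCon {α : Type} (θ : α → α → Prop) : Con (FreeMonoid α) := conGen (traceRel θ)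

/-- The trace monoid `M(Σ,θ)`. -/
abbrev TraceMonoid {α : Type} (θ : α → α → Prop) := (traceCon θ).Quotient

/-- The canonical surjection `φ : Σ* → M(Σ,θ)`. -/
def phi {α : Type} (θ : α → α → Prop) : FreeMonoid α →* TraceMonoid θ := (traceCon θ).mk'

/-- The terminal alphabet of a trace. -/
def TA {α : Type} (θ : α → α → Prop) (t : TraceMonoid θ) : Set α :=
  {x | ∃ u : TraceMonoid θ, t = u * phi θ (FreeMonoid.of x)}

/-- The left Lazard factor: traces whose terminal alphabet avoids `B`. -/
def leftFactor {α : Type} (θ : α → α → Prop) (B : Set α) : Set (TraceMonoid θ) :=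
  {t | TA θ t ∩ B = ∅}

/-- The submonoid of `M(Σ,θ)` generated by the letters of `B`,
identified with `M(B,θ_B)`. -/
def subTrace {α : Type} (θ : α → α → Prop) (B : Set α) : Submonoid (TraceMonoid θ) :=
  Submonoid.closure ((fun x => phi θ (FreeMonoid.of x)) '' B)

section LazardAux

open List

open scoped Classical

/-- Projection of a word to the letters `{a, b}`. -/
noncomputable def projL {α : Type} (a b : α) (u : List α) : List α :=
  u.filter fun c => decide (c = a ∨ c = b)

@[simp] lemma projL_nil {α : Type} (a b : α) : projL a b ([] : List α) = [] := rfl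

lemma projL_cons_pos {α : Type} {a b c : α} (h : c = a ∨ c = b) (t : List α) :
    projL a b (c :: t) = c :: projL a b t := by
  simp [projL, List.filter_cons, h]

lemma projL_cons_neg {α : Type} {a b c : α} (h : ¬(c = a ∨ c = b)) (t : List α) :
    projL a b (c :: t) = projL a b t := by
  simp [projL, List.filter_cons, h]

lemma projL_append {α : Type} (a b : α) (u v : List α) :
    projL a b (u ++ v) = projL a b u ++ projL a b v := List.filter_append u v

lemma mem_projL {α : Type} {a b x : α} {u : List α} :
    x ∈ projL a b u ↔ x ∈ u ∧ (x = a ∨ x = b) := by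
  simp [projL, List.mem_filter]

lemma projL_eq_nil {α : Type} {a b : α} {p : List α} (h : ∀ c ∈ p, ¬(c = a ∨ c = b)) :
    projL a b p = [] :=
  List.filter_eq_nil_iff.mpr (by simpa using h)

variable {α : Type} (θ : α → α → Prop)

/-- Identity map from the free monoid to lists. -/
def tl {α : Type} (u : FreeMonoid α) : List α := u

/-- Base relation lifts into the congruence. -/
lemma tc_of {u v : FreeMonoid α} (h : traceRel θ u v) : traceCon θ u v :=
  ConGen.Rel.of _ _ h

lemma tc_swap {a b : α} (h : θ a b) (t : List α) :
    traceCon θ (a :: b :: t) (b :: a :: t) := by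
  have h1 : traceCon θ (FreeMonoid.of a * FreeMonoid.of b) (FreeMonoid.of b * FreeMonoid.of a) :=
    tc_of θ ⟨a, b, h, rfl, rfl⟩
  exact (traceCon θ).mul h1 ((traceCon θ).refl (t : FreeMonoid α))

lemma tc_cons {a : α} {t t' : List α} (h : traceCon θ t t') :
    traceCon θ (a :: t) (a :: t') :=
  (traceCon θ).mul ((traceCon θ).refl (FreeMonoid.of a)) h

lemma tc_append_left (p : List α) {t t' : List α} (h : traceCon θ t t') :
    traceCon θ (p ++ t) (p ++ t') :=
  (traceCon θ).mul ((traceCon θ).refl (p : FreeMonoid α)) h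

lemma tc_append_right {t t' : List α} (p : List α) (h : traceCon θ t t') :
    traceCon θ (t ++ p) (t' ++ p) :=
  (traceCon θ).mul h ((traceCon θ).refl (p : FreeMonoid α))

lemma tc_moveLeft (a : α) : ∀ (p s : List α), (∀ c ∈ p, θ c a) →
    traceCon θ (p ++ a :: s) (a :: (p ++ s))
  | [], s, _ => (traceCon θ).refl _
  | c :: p, s, h => by
    have ih := tc_moveLeft a p s fun x hx => h x (mem_cons_of_mem _ hx)
    have h1 : traceCon θ ((c :: p) ++ a :: s) (c :: a :: (p ++ s)) := tc_cons θ ih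
    exact (traceCon θ).trans h1 (tc_swap θ (h c (mem_cons_self)) (p ++ s))

lemma tc_moveRight (a : α) : ∀ (s : List α), (∀ c ∈ s, θ a c) →
    traceCon θ (a :: s) (s ++ [a])
  | [], _ => (traceCon θ).refl _
  | c :: s, h => by
    have h1 := tc_swap θ (h c (mem_cons_self)) s
    have ih := tc_moveRight a s fun x hx => h x (mem_cons_of_mem _ hx)
    exact (traceCon θ).trans h1 (tc_cons θ ih)

/-- The projection congruence. -/
noncomputable def projCon : Con (FreeMonoid α) where
  r u v := ∀ a b : α, (a = b ∨ ¬ θ a b) → projL a b u = projL a b v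
  iseqv :=
    ⟨fun _ _ _ _ => rfl, fun h a b hab => (h a b hab).symm,
      fun h1 h2 a b hab => (h1 a b hab).trans (h2 a b hab)⟩
  mul' := by
    intro w x y z h1 h2 a b hab
    show projL a b (tl w ++ tl y) = projL a b (tl x ++ tl z)
    rw [projL_append, projL_append]
    exact congrArg₂ (· ++ ·) (h1 a b hab) (h2 a b hab)

lemma proj_eq (hsymm : ∀ x y, θ x y → θ y x) {u v : FreeMonoid α} (h : traceCon θ u v) :
    ∀ a b : α, (a = b ∨ ¬ θ a b) → projL a b u = projL a b v := by
  have hle : traceCon θ ≤ projCon θ := by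
    apply Con.conGen_le.2
    rintro x y ⟨a, b, hab, rfl, rfl⟩
    refine fun c d hcd => ?_
    show projL c d [a, b] = projL c d [b, a]
    by_cases ha : a = c ∨ a = d <;> by_cases hb : b = c ∨ b = d
    · have hEq : a = b := by
        rcases hcd with rfl | hcd
        · rcases ha with rfl | rfl <;> rcases hb with rfl | rfl <;> rfl
        · rcases ha with rfl | rfl <;> rcases hb with rfl | rfl
          · rfl
          · exact absurd hab hcd
          · exact absurd (hsymm _ _ hab) hcd
          · rfl
      subst hEq
      rfl
    · rw [show ([a, b] : List α) = [a] ++ [b] from rfl,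
          show ([b, a] : List α) = [b] ++ [a] from rfl, projL_append, projL_append,
          projL_cons_pos ha, projL_cons_neg hb]
      simp
    · rw [show ([a, b] : List α) = [a] ++ [b] from rfl,
          show ([b, a] : List α) = [b] ++ [a] from rfl, projL_append, projL_append,
          projL_cons_neg ha, projL_cons_pos hb]
      simp
    · rw [show ([a, b] : List α) = [a] ++ [b] from rfl,
          show ([b, a] : List α) = [b] ++ [a] from rfl, projL_append, projL_append,
          projL_cons_neg ha, projL_cons_neg hb]
  exact hle h

end LazardAux
section LazardBwd

open List

open scoped Classical

variable {α : Type} (θ : α → α → Prop)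

lemma firstSplit {a : α} : ∀ {v : List α}, a ∈ v → ∃ p s, v = p ++ a :: s ∧ a ∉ p := by
  intro v hv
  induction v with
  | nil => exact absurd hv (not_mem_nil)
  | cons c t ih =>
    by_cases hca : c = a
    · exact ⟨[], t, by rw [hca, nil_append], not_mem_nil⟩
    · have hat : a ∈ t := by
        rcases mem_cons.1 hv with h | h
        · exact absurd h.symm hca
        · exact h
      obtain ⟨p, s, rfl, hap⟩ := ih hat
      exact ⟨c :: p, s, rfl, by
        intro hmem
        rcases mem_cons.1 hmem with h | h
        · exact hca h.symm
        · exact hap h⟩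

lemma lastSplit {a : α} : ∀ {v : List α}, a ∈ v → ∃ p s, v = p ++ a :: s ∧ a ∉ s := by
  intro v hv
  induction v with
  | nil => exact absurd hv (not_mem_nil)
  | cons c t ih =>
    by_cases hat : a ∈ t
    · obtain ⟨p, s, rfl, has⟩ := ih hat
      exact ⟨c :: p, s, rfl, has⟩
    · have hca : c = a := by
        rcases mem_cons.1 hv with h | h
        · exact h.symm
        · exact absurd h hat
      exact ⟨[], t, by rw [hca, nil_append], hat⟩

/-- The hard direction: equal projections imply trace equivalence. -/
lemma bwd (hrefl : ∀ x, θ x x) (hsymm : ∀ x y, θ x y → θ y x) :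
    ∀ (n : ℕ) (u v : List α), u.length ≤ n →
    (∀ a b : α, (a = b ∨ ¬ θ a b) → projL a b u = projL a b v) →
    traceCon θ u v := by
  intro n
  induction n with
  | zero =>
    intro u v hlen h
    have hu : u = [] := List.eq_nil_of_length_eq_zero (Nat.le_zero.1 hlen)
    subst hu
    cases v with
    | nil => exact (traceCon θ).refl _
    | cons c t =>
      exfalso
      have := h c c (Or.inl rfl)
      rw [projL_nil, projL_cons_pos (Or.inl rfl)] at this
      exact nomatch this
  | succ n ih =>
    intro u v hlen h
    cases u with
    | nil =>
      cases v with
      | nil => exact (traceCon θ).refl _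
      | cons c t =>
        exfalso
        have := h c c (Or.inl rfl)
        rw [projL_nil, projL_cons_pos (Or.inl rfl)] at this
        exact nomatch this
    | cons a u₁ =>
      -- a occurs in v
      have hav : a ∈ v := by
        have := h a a (Or.inl rfl)
        rw [projL_cons_pos (Or.inl rfl)] at this
        have : a ∈ projL a a v := this ▸ (mem_cons_self (a := a))
        exact (mem_projL.1 this).1
      obtain ⟨p, s, rfl, hap⟩ := firstSplit hav
      -- every letter of p commutes with a
      have hpcomm : ∀ c ∈ p, θ c a := by
        intro c hcp
        by_contra hca
        have hcne : c ≠ a := fun e => hap (e ▸ hcp)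
        have hproj := h c a (Or.inr hca)
        rw [projL_cons_pos (Or.inr rfl), projL_append, projL_cons_pos (Or.inr rfl)] at hproj
        -- LHS head is a, RHS head is head of projL c a p which is c
        have hcmem : c ∈ projL c a p := mem_projL.2 ⟨hcp, Or.inl rfl⟩
        obtain ⟨x, t', hxt⟩ := List.exists_cons_of_ne_nil (ne_nil_of_mem hcmem)
        rw [hxt] at hproj
        have hxp : x ∈ projL c a p := hxt ▸ (mem_cons_self (a := x) (l := t'))
        have hx := mem_projL.1 hxp
        have hxa : x ≠ a := fun e => hap (e ▸ hx.1)
        rw [cons_append] at hproj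
        exact hxa (List.head_eq_of_cons_eq hproj).symm
      -- projections of u₁ and p ++ s agree
      have h₁ : ∀ c d : α, (c = d ∨ ¬ θ c d) → projL c d u₁ = projL c d (p ++ s) := by
        intro c d hcd
        by_cases hac : a = c ∨ a = d
        · -- then no letter of p is in {c, d}
          have hpnil : projL c d p = [] := by
            apply projL_eq_nil
            intro e hep hecd
            have hea : e ≠ a := fun h' => hap (h' ▸ hep)
            have hθea : θ e a := hpcomm e hep
            rcases hcd with rfl | hcd
            · -- c = d; a ∈ {c}; e ∈ {c} so e = a
              rcases hac with rfl | rfl <;> rcases hecd with rfl | rfl <;> exact hea rfl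
            · rcases hac with rfl | rfl <;> rcases hecd with rfl | rfl
              · exact hea rfl
              · -- a = c, e = d : θ e a means θ d c, so θ c d, contra
                exact hcd (hsymm _ _ hθea)
              · -- a = d, e = c : θ e a means θ c d, contra
                exact hcd hθea
              · exact hea rfl
          have hproj := h c d hcd
          have hada : a = c ∨ a = d := hac
          rw [projL_cons_pos hada, projL_append, hpnil, nil_append,
            projL_cons_pos hada] at hproj
          rw [projL_append, hpnil, nil_append]
          exact List.tail_eq_of_cons_eq hproj
        · -- a ∉ {c, d}
          have hproj := h c d hcd
          rw [projL_cons_neg hac, projL_append, projL_cons_neg hac] at hproj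
          rw [projL_append]
          exact hproj
      have hlen₁ : u₁.length ≤ n := Nat.le_of_succ_le_succ (by simpa using hlen)
      have ih₁ := ih u₁ (p ++ s) hlen₁ h₁
      have hmove := tc_moveLeft θ a p s hpcomm
      exact (traceCon θ).trans (tc_cons θ ih₁) ((traceCon θ).symm hmove)

lemma tc_cancel_right (hrefl : ∀ x, θ x x) (hsymm : ∀ x y, θ x y → θ y x)
    {u v : List α} (x : α) (h : traceCon θ (u ++ [x]) (v ++ [x])) : traceCon θ u v := by
  apply bwd θ hrefl hsymm u.length u v le_rfl
  intro a b hab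
  have := proj_eq θ hsymm h a b hab
  rw [projL_append, projL_append] at this
  exact List.append_cancel_right this

end LazardBwd
section LazardMain

open List

open scoped Classical

variable {α : Type} (θ : α → α → Prop)

/-- If `u ≡ w·x` then the last occurrence of `x` in `u` is followed only by
letters commuting with `x`. -/
lemma TA_split (hsymm : ∀ x y, θ x y → θ y x) {u w : List α} {x : α}
    (h : traceCon θ u (w ++ [x])) :
    ∃ p s, u = p ++ x :: s ∧ x ∉ s ∧ ∀ c ∈ s, θ c x := by
  have hxu : x ∈ u := by
    have := proj_eq θ hsymm h x x (Or.inl rfl)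
    rw [projL_append, projL_cons_pos (Or.inl rfl), projL_nil] at this
    have hx : x ∈ projL x x u := by rw [this]; exact mem_append_right _ (mem_cons_self (a := x))
    exact (mem_projL.1 hx).1
  obtain ⟨p, s, rfl, hxs⟩ := lastSplit hxu
  refine ⟨p, s, rfl, hxs, ?_⟩
  intro c hc
  by_contra hcx
  have hcne : c ≠ x := fun e => hxs (e ▸ hc)
  have hnxc : ¬ θ x c := fun h' => hcx (hsymm _ _ h')
  have hproj := proj_eq θ hsymm h x c (Or.inr hnxc)
  rw [projL_append, projL_append, projL_cons_pos (Or.inl rfl),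
    projL_cons_pos (Or.inl rfl), projL_nil] at hproj
  -- RHS : projL x c w ++ [x]; LHS : projL x c p ++ x :: projL x c s
  have hcmem : c ∈ projL x c s := mem_projL.2 ⟨hc, Or.inr rfl⟩
  obtain ⟨S₀, y, hS⟩ := (projL x c s).eq_nil_or_concat.resolve_left (ne_nil_of_mem hcmem)
  rw [List.concat_eq_append] at hS
  have hymem : y ∈ projL x c s := by rw [hS]; exact mem_append_right _ (mem_cons_self (a := y))
  have hy := mem_projL.1 hymem
  have hyc : y = c := by
    rcases hy.2 with rfl | rfl
    · exact absurd hy.1 hxs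
    · rfl
  rw [hS, hyc] at hproj
  -- hproj : projL x c p ++ x :: (S₀ ++ [c]) = projL x c w ++ [x]
  have hlast : (projL x c p ++ x :: (S₀ ++ [c])).getLast? = some c := by
    rw [show projL x c p ++ x :: (S₀ ++ [c]) = (projL x c p ++ x :: S₀) ++ [c] by
      simp [List.append_assoc]]
    exact List.getLast?_concat
  rw [hproj, List.getLast?_concat] at hlast
  exact hcne (Option.some.inj hlast).symm

/-- Membership of `b` in the terminal alphabet of `phi θ u`. -/
lemma mem_TA_of_word {u q : List α} {b : α} (h : traceCon θ u (q ++ [b])) :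
    b ∈ TA θ (phi θ (u : FreeMonoid α)) := by
  refine ⟨phi θ (q : FreeMonoid α), ?_⟩
  have h1 : phi θ (u : FreeMonoid α) = phi θ ((q ++ [b] : List α) : FreeMonoid α) :=
    (Con.eq (traceCon θ)).2 h
  rw [h1]
  rfl

/-- Key lemma: if `u·w ≡ z·b` with `u` a left factor, `w` over `B`, `b ∈ B`,
then `b` can be extracted from the right of `w`. -/
lemma factB (hsymm : ∀ x y, θ x y → θ y x) {B : Set α} {u w z : List α} {b : α}
    (hw : ∀ c ∈ w, c ∈ B) (hu : phi θ (u : FreeMonoid α) ∈ leftFactor θ B) (hb : b ∈ B)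
    (h : traceCon θ (u ++ w) (z ++ [b])) :
    ∃ w₂ : List α, (∀ c ∈ w₂, c ∈ B) ∧ traceCon θ w (w₂ ++ [b]) := by
  obtain ⟨p, s, hsplit, hbs, hcomm⟩ := TA_split θ hsymm h
  rcases List.append_eq_append_iff.1 hsplit with ⟨k, hk1, hk2⟩ | ⟨k, hk1, hk2⟩
  · -- p = u ++ k, w = k ++ b :: s
    refine ⟨k ++ s, ?_, ?_⟩
    · intro c hc
      rcases mem_append.1 hc with hck | hcs
      · exact hw c (hk2 ▸ mem_append_left _ hck)
      · exact hw c (hk2 ▸ mem_append_right _ (mem_cons_of_mem _ hcs))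
    · rw [hk2, List.append_assoc]
      apply tc_append_left θ k
      exact tc_moveRight θ b s fun c hc => hsymm _ _ (hcomm c hc)
  · -- u = p ++ k, b :: s = k ++ w
    cases k with
    | nil =>
      -- w = b :: s
      have hw' : w = b :: s := by simpa using hk2.symm
      refine ⟨s, ?_, ?_⟩
      · intro c hc
        exact hw c (hw' ▸ mem_cons_of_mem _ hc)
      · rw [hw']
        exact tc_moveRight θ b s fun c hc => hsymm _ _ (hcomm c hc)
    | cons b' k' =>
      exfalso
      have hb' : b = b' := List.head_eq_of_cons_eq hk2
      subst hb'
      have hs : s = k' ++ w := List.tail_eq_of_cons_eq hk2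
      have hk'comm : ∀ c ∈ k', θ c b := fun c hc => hcomm c (hs ▸ mem_append_left _ hc)
      -- u = p ++ b :: k' ≡ (p ++ k') ++ [b]
      have hu' : traceCon θ u ((p ++ k') ++ [b]) := by
        rw [hk1, List.append_assoc]
        apply tc_append_left θ p
        exact tc_moveRight θ b k' fun c hc => hsymm _ _ (hk'comm c hc)
      have hTA : b ∈ TA θ (phi θ (u : FreeMonoid α)) := mem_TA_of_word θ hu'
      have : b ∈ TA θ (phi θ (u : FreeMonoid α)) ∩ B := ⟨hTA, hb⟩
      rw [hu] at this
      exact this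
  
end LazardMain
section LazardFinal

open List

open scoped Classical

variable {α : Type} (θ : α → α → Prop)

lemma main_induction (hrefl : ∀ x, θ x x) (hsymm : ∀ x y, θ x y → θ y x) (B : Set α) :
    ∀ v : List α, ∀ u u' w : List α, (∀ c ∈ w, c ∈ B) → (∀ c ∈ v, c ∈ B) →
      phi θ (u : FreeMonoid α) ∈ leftFactor θ B →
      phi θ (u' : FreeMonoid α) ∈ leftFactor θ B →
      traceCon θ (u ++ w) (u' ++ v) → traceCon θ u u' ∧ traceCon θ w v := by
  intro v
  induction v using List.reverseRecOn with
  | nil =>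
    intro u u' w hw hv hu hu' h
    rw [List.append_nil] at h
    rcases List.eq_nil_or_concat w with rfl | ⟨w₀, b, rfl⟩
    · rw [List.append_nil] at h
      exact ⟨h, (traceCon θ).refl _⟩
    · exfalso
      simp only [List.concat_eq_append] at hw h
      have hb : b ∈ B := hw b (mem_append_right _ (mem_cons_self (a := b)))
      rw [← List.append_assoc] at h
      have hTA : b ∈ TA θ (phi θ (u' : FreeMonoid α)) :=
        mem_TA_of_word θ ((traceCon θ).symm h)
      have : b ∈ TA θ (phi θ (u' : FreeMonoid α)) ∩ B := ⟨hTA, hb⟩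
      rw [hu'] at this
      exact this
  | append_singleton v₀ b ih =>
    intro u u' w hw hv hu hu' h
    have hb : b ∈ B := hv b (mem_append_right _ (mem_cons_self (a := b)))
    rw [← List.append_assoc] at h
    obtain ⟨w₂, hw₂B, hw₂⟩ := factB θ hsymm hw hu hb h
    have h2 : traceCon θ ((u ++ w₂) ++ [b]) ((u' ++ v₀) ++ [b]) := by
      refine (traceCon θ).trans ?_ h
      rw [List.append_assoc]
      exact (traceCon θ).symm (tc_append_left θ u hw₂)
    have h3 := tc_cancel_right θ hrefl hsymm b h2
    obtain ⟨hA, hB2⟩ := ih u u' w₂ hw₂B (fun c hc => hv c (mem_append_left _ hc)) hu hu' h3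
    refine ⟨hA, (traceCon θ).trans hw₂ ?_⟩
    exact tc_append_right θ [b] hB2

lemma mem_subTrace_word {B : Set α} {m : TraceMonoid θ} (hm : m ∈ subTrace θ B) :
    ∃ w : List α, (∀ c ∈ w, c ∈ B) ∧ m = phi θ (w : FreeMonoid α) := by
  induction hm using Submonoid.closure_induction with
  | mem x hx =>
    obtain ⟨c, hc, rfl⟩ := hx
    exact ⟨[c], by simpa using hc, rfl⟩
  | one => exact ⟨[], by simp, rfl⟩
  | mul x y hx hy ihx ihy =>
    obtain ⟨w1, h1, rfl⟩ := ihx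
    obtain ⟨w2, h2, rfl⟩ := ihy
    refine ⟨w1 ++ w2, ?_, rfl⟩
    intro c hc
    rcases mem_append.1 hc with h | h
    · exact h1 c h
    · exact h2 c h

end LazardFinal

/-- Lazard bisection, uniqueness of the decomposition. -/
theorem lazard_bisection_unique {α : Type} [Fintype α] (θ : α → α → Prop)
    (hrefl : ∀ x, θ x x) (hsymm : ∀ x y, θ x y → θ y x) (B : Set α)
    (l l' m m' : TraceMonoid θ)
    (hl : l ∈ leftFactor θ B) (hl' : l' ∈ leftFactor θ B)
    (hm : m ∈ subTrace θ B) (hm' : m' ∈ subTrace θ B)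
    (h : l * m = l' * m') : l = l' ∧ m = m' := by
  obtain ⟨u, rfl⟩ := Con.mk'_surjective l
  obtain ⟨u', rfl⟩ := Con.mk'_surjective l'
  obtain ⟨w, hwB, rfl⟩ := mem_subTrace_word θ hm
  obtain ⟨v, hvB, rfl⟩ := mem_subTrace_word θ hm'
  have h' : traceCon θ (tl u ++ w) (tl u' ++ v) := by
    apply (Con.eq (traceCon θ)).1
    exact h
  obtain ⟨hA, hB2⟩ := main_induction θ hrefl hsymm B v u u' w hwB hvB hl hl' h'
  exact ⟨(Con.eq (traceCon θ)).2 hA, (Con.eq (traceCon θ)).2 hB2⟩
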